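/- arXiv:1709.00545 — 2 statements merged into one kernel-verified Lean document; each statement's English description precedes it below -/
import Mathlib

section
/- Let G be a connected multigraph and γ ⊆ G a connected subgraph spanned by a subset of edges. Then ψ_G = ψ_γ · ψ_{G/γ} + R_γ, where R_γ is a polynomial each of whose monomials has degree strictly greater than |γ| (the first Betti number of γ) in the variables x_e with e ∈ E(γ). -/
open MvPolynomial

structure MGraph (V E : Type) where
  ends : E → Sym2 V

namespace MGraph

variable {V E : Type} (G : MGraph V E)

def adj (S : Set E) (u v : V) : Prop := ∃ e ∈ S, G.ends e = s(u, v)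

def conn (S : Set E) (u v : V) : Prop := Relation.ReflTransGen (G.adj S) u v

def Connected : Prop := ∀ u v : V, G.conn Set.univ u v

def IsForest (S : Set E) : Prop :=
  ∀ e ∈ S, ∀ u v : V, G.ends e = s(u, v) → ¬ G.conn (S \ {e}) u v

def IsSpanningTree (T : Set E) : Prop := G.IsForest T ∧ ∀ u v : V, G.conn T u v

def IsSpanningForestOf (S T : Set E) : Prop :=
  T ⊆ S ∧ G.IsForest T ∧ ∀ u v : V, G.conn S u v → G.conn T u v

noncomputable def psi : MvPolynomial E ℝ :=
  ∑ᶠ T ∈ {T : Set E | G.IsSpanningTree T}, ∏ᶠ e ∈ Tᶜ, (X e : MvPolynomial E ℝ)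

noncomputable def psiSub (S : Set E) : MvPolynomial E ℝ :=
  ∑ᶠ T ∈ {T : Set E | G.IsSpanningForestOf S T}, ∏ᶠ e ∈ S \ T, (X e : MvPolynomial E ℝ)

noncomputable def ncomp (S : Set E) : ℕ := Nat.card (Quot (G.adj S))

noncomputable def betti (S : Set E) : ℤ :=
  (Nat.card S : ℤ) - (Nat.card V : ℤ) + (G.ncomp S : ℤ)

noncomputable def rank : ℤ := G.betti Set.univ

def IsCore (S : Set E) : Prop := ∀ e ∈ S, G.betti (S \ {e}) < G.betti S

noncomputable def contract (S : Set E) : MGraph (Quot (G.adj S)) ↥(Sᶜ) :=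
  ⟨fun e => (G.ends e.1).map (Quot.mk (G.adj S))⟩

open Classical in
noncomputable def deg (v : V) : ℕ :=
  ∑ᶠ e : E, if G.ends e = s(v, v) then 2 else if v ∈ G.ends e then 1 else 0

noncomputable def sdd (d : ℤ) (S : Set E) : ℤ :=
  d * G.betti S - 2 * (Nat.card S : ℤ)

end MGraph

/-! ### Auxiliary lemmas -/

namespace MGraph

section Aux

variable {V E : Type} {G : MGraph V E}

lemma adj_symm {S : Set E} {u v : V} (h : G.adj S u v) : G.adj S v u := by
  obtain ⟨e, he, h⟩ := h
  exact ⟨e, he, by rw [h, Sym2.eq_swap]⟩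

lemma conn_refl (S : Set E) (u : V) : G.conn S u u := Relation.ReflTransGen.refl

lemma conn_symm {S : Set E} {u v : V} (h : G.conn S u v) : G.conn S v u :=
  by
    induction h with
    | refl => exact Relation.ReflTransGen.refl
    | tail _ hs ih => exact (Relation.ReflTransGen.single (adj_symm hs)).trans ih

lemma conn_trans {S : Set E} {u v w : V} (h : G.conn S u v) (h' : G.conn S v w) :
    G.conn S u w := h.trans h'

lemma adj_mono {S S' : Set E} (hS : S ⊆ S') {u v : V} (h : G.adj S u v) : G.adj S' u v := by
  obtain ⟨e, he, h⟩ := h; exact ⟨e, hS he, h⟩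

lemma conn_mono {S S' : Set E} (hS : S ⊆ S') {u v : V} (h : G.conn S u v) : G.conn S' u v :=
  by
    induction h with
    | refl => exact Relation.ReflTransGen.refl
    | tail _ hs ih => exact ih.tail (adj_mono hS hs)

lemma quot_mk_eq_iff {S : Set E} {u v : V} :
    Quot.mk (G.adj S) u = Quot.mk (G.adj S) v ↔ G.conn S u v := by
  rw [Quot.eq]
  constructor
  · intro h
    induction h with
    | rel x y h => exact Relation.ReflTransGen.single h
    | refl => exact Relation.ReflTransGen.refl
    | symm x y _ ih => exact conn_symm ih
    | trans x y z _ _ ih1 ih2 => exact ih1.trans ih2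
  · intro h
    induction h with
    | refl => exact Relation.EqvGen.refl _
    | tail _ h ih => exact ih.trans _ _ _ (Relation.EqvGen.rel _ _ h)

/-- L9: exchange lemma -/
lemma conn_cases_of_edge {S : Set E} {u v a b : V} {f : E} (hf : G.ends f = s(a, b))
    (h : G.conn S u v) :
    G.conn (S \ {f}) u v ∨ (G.conn (S \ {f}) u a ∧ G.conn (S \ {f}) b v) ∨
      (G.conn (S \ {f}) u b ∧ G.conn (S \ {f}) a v) := by
  induction h with
  | refl => exact Or.inl (conn_refl _ _)
  | @tail x y hxz hstep ih =>
    by_cases hef : ∃ e ∈ S \ {f}, G.ends e = s(x, y)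
    · -- the last step avoids f
      have hstep' : G.conn (S \ {f}) x y := Relation.ReflTransGen.single hef
      rcases ih with h1 | ⟨h1, h2⟩ | ⟨h1, h2⟩
      · exact Or.inl (h1.trans hstep')
      · exact Or.inr (Or.inl ⟨h1, h2.trans hstep'⟩)
      · exact Or.inr (Or.inr ⟨h1, h2.trans hstep'⟩)
    · -- the last step must use f
      obtain ⟨e, he, hends⟩ := hstep
      have hefeq : e = f := by
        by_contra hne
        exact hef ⟨e, ⟨he, hne⟩, hends⟩
      subst hefeq
      rw [hf] at hends
      have hcases : (a = x ∧ b = y) ∨ (a = y ∧ b = x) := by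
        rw [Sym2.eq_iff] at hends; tauto
      rcases ih with h1 | ⟨h1, h2⟩ | ⟨h1, h2⟩
      · rcases hcases with ⟨rfl, rfl⟩ | ⟨rfl, rfl⟩
        · exact Or.inr (Or.inl ⟨h1, conn_refl _ _⟩)
        · exact Or.inr (Or.inr ⟨h1, conn_refl _ _⟩)
      · rcases hcases with ⟨rfl, rfl⟩ | ⟨rfl, rfl⟩
        · exact Or.inr (Or.inl ⟨h1, conn_refl _ _⟩)
        · exact Or.inl h1
      · rcases hcases with ⟨rfl, rfl⟩ | ⟨rfl, rfl⟩
        · exact Or.inl h1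
        · exact Or.inr (Or.inr ⟨h1, conn_refl _ _⟩)

lemma isForest_mono {S T : Set E} (hST : S ⊆ T) (hT : G.IsForest T) : G.IsForest S := by
  intro e he u v hends hconn
  exact hT e (hST he) u v hends (conn_mono (by exact Set.diff_subset_diff_left hST) hconn)


/-- Projection of connectivity to the contracted graph. -/
lemma conn_project {S B : Set E} {T' : Set ↥(Sᶜ)}
    (hB : B ⊆ S ∪ Subtype.val '' T') {u v : V} (h : G.conn B u v) :
    (G.contract S).conn T' (Quot.mk (G.adj S) u) (Quot.mk (G.adj S) v) := by
  induction h with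
  | refl => exact Relation.ReflTransGen.refl
  | @tail x y _ hstep ih =>
    obtain ⟨e, he, hends⟩ := hstep
    rcases hB he with heS | ⟨e', he', rfl⟩
    · have : Quot.mk (G.adj S) x = Quot.mk (G.adj S) y :=
        Quot.sound ⟨e, heS, hends⟩
      rwa [← this]
    · refine ih.tail ⟨e', he', ?_⟩
      show (G.ends e'.1).map _ = _
      rw [hends, Sym2.map_pair_eq]

/-- Lifting of connectivity from the contracted graph, given a bridging set F. -/
lemma conn_lift {S F : Set E} {T' : Set ↥(Sᶜ)}
    (hbr : ∀ x y : V, Quot.mk (G.adj S) x = Quot.mk (G.adj S) y → G.conn F x y)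
    {a b : Quot (G.adj S)} (h : (G.contract S).conn T' a b) :
    ∀ u v : V, Quot.mk (G.adj S) u = a → Quot.mk (G.adj S) v = b →
      G.conn (F ∪ Subtype.val '' T') u v := by
  induction h with
  | refl =>
    intro u v hu hv
    exact conn_mono Set.subset_union_left (hbr u v (hu.trans hv.symm))
  | @tail x y _ hstep ih =>
    intro u v hu hv
    obtain ⟨e', he', hends⟩ := hstep
    -- ends of e'.val
    induction' hsym : G.ends e'.1 with p q
    have hmap : s(Quot.mk (G.adj S) p, Quot.mk (G.adj S) q) = s(x, y) := by
      have h2 : (G.ends e'.1).map (Quot.mk (G.adj S)) = s(x, y) := hends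
      rwa [hsym, Sym2.map_pair_eq] at h2
    have hadj : G.conn (F ∪ Subtype.val '' T') p q :=
      Relation.ReflTransGen.single ⟨e'.1, Or.inr ⟨e', he', rfl⟩, hsym⟩
    rw [Sym2.eq_iff] at hmap
    rcases hmap with ⟨hp, hq⟩ | ⟨hp, hq⟩
    · have h1 := ih u p hu hp
      have h2 : G.conn (F ∪ Subtype.val '' T') q v :=
        conn_mono Set.subset_union_left (hbr q v (hq.trans hv.symm))
      exact (h1.trans hadj).trans h2
    · have h1 := ih u q hu hq
      have h2 : G.conn (F ∪ Subtype.val '' T') p v :=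
        conn_mono Set.subset_union_left (hbr p v (hp.trans hv.symm))
      exact (h1.trans (conn_symm hadj)).trans h2


/-- auxiliary induction: no path between the ends of a forest edge e ∈ F ⊆ S,
even allowing extra edges from a quotient-forest. -/
lemma forest_union_aux [Finite E] {S F : Set E} {T' : Set ↥(Sᶜ)}
    (hF : G.IsForest F) (hFS : F ⊆ S) (hT' : (G.contract S).IsForest T')
    {e : E} (he : e ∈ F) {u v : V} (hends : G.ends e = s(u, v)) :
    ∀ (n : ℕ) (T'' : Set ↥(Sᶜ)), T'' ⊆ T' → T''.ncard ≤ n →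
      ¬ G.conn ((F \ {e}) ∪ Subtype.val '' T'') u v := by
  have quv : Quot.mk (G.adj S) u = Quot.mk (G.adj S) v :=
    quot_mk_eq_iff.mpr (Relation.ReflTransGen.single ⟨e, hFS he, hends⟩)
  intro n
  induction n with
  | zero =>
    intro T'' _ hcard hconn
    rw [Nat.le_zero, Set.ncard_eq_zero (Set.toFinite _)] at hcard
    subst hcard
    simp only [Set.image_empty, Set.union_empty] at hconn
    exact hF e he u v hends hconn
  | succ n ih =>
    intro T'' hsub hcard hconn
    rcases Set.eq_empty_or_nonempty T'' with rfl | ⟨f, hf⟩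
    · simp only [Set.image_empty, Set.union_empty] at hconn
      exact hF e he u v hends hconn
    · induction' hsym : G.ends f.1 with a b
      have hconn' := conn_cases_of_edge (f := f.1) hsym hconn
      have hsubset : ((F \ {e}) ∪ Subtype.val '' T'') \ {f.1} ⊆
          (F \ {e}) ∪ Subtype.val '' (T'' \ {f}) := by
        rintro x ⟨hx | ⟨g, hg, rfl⟩, hne⟩
        · exact Or.inl hx
        · exact Or.inr ⟨g, ⟨hg, fun h => hne (by rw [Set.mem_singleton_iff] at h ⊢; rw [h])⟩, rfl⟩
      have hcard' : (T'' \ {f}).ncard ≤ n := by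
        have := Set.ncard_diff_singleton_add_one hf (Set.toFinite _)
        omega
      have hsubset2 : ((F \ {e}) ∪ Subtype.val '' T'') \ {f.1} ⊆
          S ∪ Subtype.val '' (T'' \ {f}) := by
        intro x hx
        rcases hsubset hx with h | h
        · exact Or.inl (hFS h.1)
        · exact Or.inr h
      rcases hconn' with h1 | ⟨h1, h2⟩ | ⟨h1, h2⟩
      · exact ih (T'' \ {f}) (Set.diff_subset.trans hsub) hcard' (conn_mono hsubset h1)
      · have hqa := conn_project hsubset2 h1
        have hqb := conn_project hsubset2 h2
        have h3 := conn_symm hqa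
        have h4 := conn_symm hqb
        rw [quv] at h3
        have hqab := h3.trans h4
        have hfends : (G.contract S).ends f = s(Quot.mk (G.adj S) a, Quot.mk (G.adj S) b) := by
          show (G.ends f.1).map _ = _
          rw [hsym, Sym2.map_pair_eq]
        exact hT' f (hsub hf) _ _ hfends
          (conn_mono (Set.diff_subset_diff_left hsub) hqab)
      · have hqa := conn_project hsubset2 h1
        have hqb := conn_project hsubset2 h2
        rw [← quv] at hqb
        have hqab := hqb.trans hqa
        have hfends : (G.contract S).ends f = s(Quot.mk (G.adj S) a, Quot.mk (G.adj S) b) := by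
          show (G.ends f.1).map _ = _
          rw [hsym, Sym2.map_pair_eq]
        exact hT' f (hsub hf) _ _ hfends
          (conn_mono (Set.diff_subset_diff_left hsub) hqab)

lemma forest_union [Finite E] {S F : Set E} {T' : Set ↥(Sᶜ)}
    (hF : G.IsForest F) (hFS : F ⊆ S) (hT' : (G.contract S).IsForest T') :
    G.IsForest (F ∪ Subtype.val '' T') := by
  rintro e (he | ⟨e', he', rfl⟩) u v hends hconn
  · refine forest_union_aux hF hFS hT' he hends T'.ncard T' subset_rfl le_rfl
      (conn_mono ?_ hconn)
    rintro x ⟨hx | hx, hne⟩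
    · exact Or.inl ⟨hx, hne⟩
    · exact Or.inr hx
  · have hsubset2 : (F ∪ Subtype.val '' T') \ {e'.1} ⊆ S ∪ Subtype.val '' (T' \ {e'}) := by
      rintro x ⟨hx | ⟨g, hg, rfl⟩, hne⟩
      · exact Or.inl (hFS hx)
      · exact Or.inr ⟨g, ⟨hg, fun h => hne (by rw [Set.mem_singleton_iff] at h ⊢; rw [h])⟩, rfl⟩
    have hq := conn_project hsubset2 hconn
    have hfends : (G.contract S).ends e' = s(Quot.mk (G.adj S) u, Quot.mk (G.adj S) v) := by
      show (G.ends e'.1).map _ = _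
      rw [hends, Sym2.map_pair_eq]
    exact hT' e' he' _ _ hfends hq

lemma isSpanningTree_union [Finite E] {S F : Set E} {T' : Set ↥(Sᶜ)}
    (hF : G.IsSpanningForestOf S F) (hT' : (G.contract S).IsSpanningTree T') :
    G.IsSpanningTree (F ∪ Subtype.val '' T') := by
  refine ⟨forest_union hF.2.1 hF.1 hT'.1, fun u v => ?_⟩
  exact conn_lift (fun x y h => hF.2.2 x y (quot_mk_eq_iff.mp h)) (hT'.2 _ _) u v rfl rfl

lemma quotient_tree {S T : Set E} (hT : G.IsSpanningTree T)
    (hsf : G.IsSpanningForestOf S (T ∩ S)) :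
    (G.contract S).IsSpanningTree (Subtype.val ⁻¹' T) := by
  have hbr : ∀ x y : V, Quot.mk (G.adj S) x = Quot.mk (G.adj S) y → G.conn (T ∩ S) x y :=
    fun x y h => hsf.2.2 x y (quot_mk_eq_iff.mp h)
  constructor
  · intro e' he' x y hends hconn
    induction' hsym : G.ends e'.1 with a b
    have hsub : (T ∩ S) ∪ Subtype.val '' ((Subtype.val ⁻¹' T) \ {e'}) ⊆ T \ {e'.1} := by
      rintro z (⟨hz, hzS⟩ | ⟨g, ⟨hg, hgne⟩, rfl⟩)
      · exact ⟨hz, fun h => e'.2 (by rwa [Set.mem_singleton_iff.mp h] at hzS)⟩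
      · exact ⟨hg, fun h => hgne (by ext; exact Set.mem_singleton_iff.mp h)⟩
    have hmap : s(Quot.mk (G.adj S) a, Quot.mk (G.adj S) b) = s(x, y) := by
      have h2 : (G.ends e'.1).map (Quot.mk (G.adj S)) = s(x, y) := hends
      rwa [hsym, Sym2.map_pair_eq] at h2
    rw [Sym2.eq_iff] at hmap
    have hTe : e'.1 ∈ T := he'
    rcases hmap with ⟨ha, hb⟩ | ⟨ha, hb⟩
    · exact hT.1 e'.1 hTe a b hsym
        (conn_mono hsub (conn_lift hbr hconn a b ha hb))
    · exact hT.1 e'.1 hTe a b hsym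
        (conn_mono hsub (conn_symm (conn_lift hbr hconn b a hb ha)))
  · intro x y
    obtain ⟨u, rfl⟩ := Quot.exists_rep x
    obtain ⟨v, rfl⟩ := Quot.exists_rep y
    refine conn_project ?_ (hT.2 u v)
    intro z hz
    by_cases hzS : z ∈ S
    · exact Or.inl hzS
    · exact Or.inr ⟨⟨z, hzS⟩, hz, rfl⟩


lemma conn_empty {u v : V} (h : G.conn (∅ : Set E) u v) : u = v := by
  induction h with
  | refl => rfl
  | tail _ hstep ih => obtain ⟨e, he, _⟩ := hstep; exact absurd he (Set.notMem_empty e)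

lemma ncomp_empty [Finite V] : G.ncomp (∅ : Set E) = Nat.card V :=
  (Nat.card_eq_of_bijective (Quot.mk _)
    ⟨fun u v h => conn_empty (quot_mk_eq_iff.mp h), fun x => Quot.exists_rep x⟩).symm

/-- removing an edge from a forest adds exactly one component -/
lemma ncomp_forest_diff [Finite V] {F : Set E} (hF : G.IsForest F) {e : E} (he : e ∈ F)
    {a b : V} (hends : G.ends e = s(a, b)) :
    G.ncomp (F \ {e}) = G.ncomp F + 1 := by
  classical
  have hmono : ∀ {u v : V}, G.adj (F \ {e}) u v → G.adj F u v :=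
    fun h => adj_mono Set.diff_subset h
  let φ : Quot (G.adj (F \ {e})) → Quot (G.adj F) :=
    Quot.lift (Quot.mk (G.adj F)) (fun u v h => Quot.sound (hmono h))
  have hφ : ∀ u : V, φ (Quot.mk _ u) = Quot.mk (G.adj F) u := fun _ => rfl
  have hnab : ¬ G.conn (F \ {e}) a b := hF e he a b hends
  let g : Quot (G.adj (F \ {e})) → Quot (G.adj F) ⊕ Unit :=
    fun x => if x = Quot.mk (G.adj (F \ {e})) b then Sum.inr () else Sum.inl (φ x)
  have hbij : Function.Bijective g := by
    constructor
    · intro x y hxy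
      obtain ⟨u, rfl⟩ := Quot.exists_rep x
      obtain ⟨v, rfl⟩ := Quot.exists_rep y
      simp only [g] at hxy
      split_ifs at hxy with h1 h2 h2
      all_goals try exact h1.trans h2.symm
      all_goals try simp at hxy
      all_goals {
        have huv : G.conn F u v := quot_mk_eq_iff.mp hxy
        rcases conn_cases_of_edge hends huv with hc | ⟨hc1, hc2⟩ | ⟨hc1, hc2⟩
        · exact quot_mk_eq_iff.mpr hc
        · exact absurd (quot_mk_eq_iff.mpr (conn_symm hc2)) h2
        · exact absurd (quot_mk_eq_iff.mpr hc1) h1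
      }
    · intro z
      rcases z with w | _
      · obtain ⟨w, rfl⟩ := Quot.exists_rep w
        by_cases hwb : G.conn (F \ {e}) w b
        · refine ⟨Quot.mk _ a, ?_⟩
          have hne : Quot.mk (G.adj (F \ {e})) a ≠ Quot.mk (G.adj (F \ {e})) b :=
            fun h => hnab (quot_mk_eq_iff.mp h)
          simp only [g, if_neg hne, hφ, Sum.inl.injEq]
          refine quot_mk_eq_iff.mpr ?_
          exact (Relation.ReflTransGen.single ⟨e, he, hends⟩).trans
            (conn_mono Set.diff_subset (conn_symm hwb))
        · refine ⟨Quot.mk _ w, ?_⟩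
          have hne : Quot.mk (G.adj (F \ {e})) w ≠ Quot.mk (G.adj (F \ {e})) b :=
            fun h => hwb (quot_mk_eq_iff.mp h)
          simp only [g, if_neg hne, hφ]
      · exact ⟨Quot.mk _ b, by simp [g]⟩
  have := Nat.card_eq_of_bijective g hbij
  simpa [ncomp, Nat.card_sum] using this

lemma forest_ncard_add_ncomp [Finite V] [Finite E] {F : Set E} (hF : G.IsForest F) :
    F.ncard + G.ncomp F = Nat.card V := by
  generalize hn : F.ncard = n
  induction n generalizing F with
  | zero =>
    rw [Set.ncard_eq_zero (Set.toFinite _)] at hn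
    subst hn
    simpa using ncomp_empty (G := G)
  | succ n ih =>
    have hne : F.Nonempty := Set.nonempty_of_ncard_ne_zero (by omega)
    obtain ⟨e, he⟩ := hne
    induction' hsym : G.ends e with a b
    have h1 : (F \ {e}).ncard = n := by
      have := Set.ncard_diff_singleton_add_one he (Set.toFinite _)
      omega
    have h2 := ih (isForest_mono Set.diff_subset hF) h1
    have h3 := ncomp_forest_diff hF he hsym
    omega

lemma ncomp_lt_of_not_spanning [Finite V] {S F : Set E} (hFS : F ⊆ S)
    {u v : V} (hconnS : G.conn S u v) (hnconnF : ¬ G.conn F u v) :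
    G.ncomp S < G.ncomp F := by
  let φ : Quot (G.adj F) → Quot (G.adj S) :=
    Quot.lift (Quot.mk (G.adj S)) (fun x y h => Quot.sound (adj_mono hFS h))
  have hsurj : Function.Surjective φ := by
    intro x; obtain ⟨w, rfl⟩ := Quot.exists_rep x; exact ⟨Quot.mk _ w, rfl⟩
  have hle : G.ncomp S ≤ G.ncomp F := Nat.card_le_card_of_surjective φ hsurj
  rcases lt_or_eq_of_le hle with h | h
  · exact h
  · exfalso
    have hbij : Function.Bijective φ :=
      (Nat.bijective_iff_surjective_and_card φ).mpr ⟨hsurj, h.symm⟩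
    have hφeq : φ (Quot.mk (G.adj F) u) = φ (Quot.mk (G.adj F) v) :=
      quot_mk_eq_iff.mpr hconnS
    exact hnconnF (quot_mk_eq_iff.mp (hbij.1 hφeq))


end Aux

end MGraph

section SetIds
variable {E : Type} {S F : Set E} {T' : Set ↥(Sᶜ)}

lemma id1 (hFS : F ⊆ S) : (F ∪ Subtype.val '' T') ∩ S = F := by
  ext x
  simp only [Set.mem_inter_iff, Set.mem_union, Set.mem_image]
  constructor
  · rintro ⟨hx | ⟨g, _, rfl⟩, hxS⟩
    · exact hx
    · exact absurd hxS g.2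
  · exact fun hx => ⟨Or.inl hx, hFS hx⟩

lemma id2 (hFS : F ⊆ S) : Subtype.val ⁻¹' (F ∪ Subtype.val '' T') = T' := by
  ext ⟨x, hx⟩
  simp only [Set.mem_preimage, Set.mem_union, Set.mem_image]
  constructor
  · rintro (h | ⟨g, hg, hgx⟩)
    · exact absurd (hFS h) hx
    · rwa [show g = ⟨x, hx⟩ from Subtype.ext hgx] at hg
  · exact fun h => Or.inr ⟨⟨x, hx⟩, h, rfl⟩

lemma id3 (T : Set E) : (T ∩ S) ∪ Subtype.val '' (Subtype.val ⁻¹' T : Set ↥(Sᶜ)) = T := by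
  ext x
  simp only [Set.mem_union, Set.mem_inter_iff, Set.mem_image, Set.mem_preimage]
  constructor
  · rintro (⟨h, _⟩ | ⟨g, hg, rfl⟩)
    · exact h
    · exact hg
  · intro hx
    by_cases hxS : x ∈ S
    · exact Or.inl ⟨hx, hxS⟩
    · exact Or.inr ⟨⟨x, hxS⟩, hx, rfl⟩

lemma id4 (hFS : F ⊆ S) : (F ∪ Subtype.val '' T')ᶜ = (S \ F) ∪ Subtype.val '' (T'ᶜ) := by
  ext x
  simp only [Set.mem_compl_iff, Set.mem_union, Set.mem_image, Set.mem_diff]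
  constructor
  · intro h
    push_neg at h
    obtain ⟨h1, h2⟩ := h
    by_cases hxS : x ∈ S
    · exact Or.inl ⟨hxS, h1⟩
    · refine Or.inr ⟨⟨x, hxS⟩, fun hc => h2 ⟨x, hxS⟩ hc rfl, rfl⟩
  · rintro (⟨hxS, hxF⟩ | ⟨g, hg, rfl⟩)
    · push_neg
      exact ⟨hxF, fun g hg hgx => (g.2 (hgx ▸ hxS)).elim⟩
    · push_neg
      refine ⟨fun h => g.2 (hFS h), fun g' hg' hgg' => hg ?_⟩
      rwa [show g' = g from Subtype.ext hgg'] at hg'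
end SetIds

lemma prod_X_monomial {E : Type} [DecidableEq E] (t : Finset E) :
    (∏ e ∈ t, (X e : MvPolynomial E ℝ)) =
      monomial (∑ e ∈ t, Finsupp.single e 1) 1 := by
  induction t using Finset.induction with
  | empty => simp [monomial_zero']
  | @insert a s hns ih =>
    rw [Finset.prod_insert hns, Finset.sum_insert hns, ih, X, monomial_mul, one_mul]


open MvPolynomial MGraph in
/-- ψ_G = ψ_γ · ψ_{G/γ} + R_γ, with every monomial of R_γ of degree
strictly greater than |γ| in the variables of E(γ). -/
theorem symanzik_factorization {V E : Type} [Finite V] [Finite E]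
    (G : MGraph V E) (hG : G.Connected) (S : Set E)
    (hγconn : ∀ u v : V, (∃ e ∈ S, u ∈ G.ends e) → (∃ e ∈ S, v ∈ G.ends e) →
      G.conn S u v) :
    ∃ R : MvPolynomial E ℝ,
      G.psi = G.psiSub S * rename Subtype.val (G.contract S).psi + R ∧
      ∀ m ∈ R.support, G.betti S < ∑ᶠ e ∈ S, (m e : ℤ) := by
  classical
  set mon : Set E → MvPolynomial E ℝ := fun T => ∏ᶠ e ∈ Tᶜ, (X e : MvPolynomial E ℝ) with hmon
  set Tfin : Finset (Set E) := (Set.toFinite {T : Set E | G.IsSpanningTree T}).toFinset with hTfin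
  set p : Set E → Prop := fun T => G.IsSpanningForestOf S (T ∩ S) with hp
  refine ⟨∑ T ∈ Tfin.filter (fun T => ¬ p T), mon T, ?_, ?_⟩
  · -- main identity
    have hpsi : G.psi = ∑ T ∈ Tfin, mon T :=
      finsum_mem_eq_finite_toFinset_sum _ (Set.toFinite _)
    have key : G.psiSub S * rename (Subtype.val : ↥(Sᶜ) → E) (G.contract S).psi
        = ∑ T ∈ Tfin.filter p, mon T := by
      set Ffin : Finset (Set E) :=
        (Set.toFinite {F : Set E | G.IsSpanningForestOf S F}).toFinset with hFfin
      set T'fin : Finset (Set ↥(Sᶜ)) :=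
        (Set.toFinite {T' : Set ↥(Sᶜ) | (G.contract S).IsSpanningTree T'}).toFinset with hT'fin
      have h1 : G.psiSub S = ∑ F ∈ Ffin, ∏ᶠ e ∈ S \ F, (X e : MvPolynomial E ℝ) :=
        finsum_mem_eq_finite_toFinset_sum _ (Set.toFinite _)
      have h2 : (G.contract S).psi
          = ∑ T' ∈ T'fin, ∏ᶠ e ∈ T'ᶜ, (X e : MvPolynomial ↥(Sᶜ) ℝ) :=
        finsum_mem_eq_finite_toFinset_sum _ (Set.toFinite _)
      rw [h1, h2, map_sum, Finset.sum_mul_sum, ← Finset.sum_product']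
      refine Finset.sum_nbij' (i := fun pr => pr.1 ∪ Subtype.val '' pr.2)
        (j := fun T => (T ∩ S, Subtype.val ⁻¹' T)) ?_ ?_ ?_ ?_ ?_
      · rintro ⟨F, T'⟩ hmem
        rw [Finset.mem_product, Set.Finite.mem_toFinset, Set.Finite.mem_toFinset] at hmem
        obtain ⟨hF, hT'⟩ := hmem
        rw [Finset.mem_filter, Set.Finite.mem_toFinset]
        refine ⟨isSpanningTree_union hF hT', ?_⟩
        show G.IsSpanningForestOf S ((F ∪ Subtype.val '' T') ∩ S)
        rwa [id1 hF.1]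
      · intro T hmem
        rw [Finset.mem_filter, Set.Finite.mem_toFinset] at hmem
        rw [Finset.mem_product, Set.Finite.mem_toFinset, Set.Finite.mem_toFinset]
        exact ⟨hmem.2, quotient_tree hmem.1 hmem.2⟩
      · rintro ⟨F, T'⟩ hmem
        rw [Finset.mem_product, Set.Finite.mem_toFinset, Set.Finite.mem_toFinset] at hmem
        have hFS := hmem.1.1
        simp only [Prod.mk.injEq]
        exact ⟨id1 hFS, id2 hFS⟩
      · intro T _
        exact id3 T
      · rintro ⟨F, T'⟩ hmem
        rw [Finset.mem_product, Set.Finite.mem_toFinset, Set.Finite.mem_toFinset] at hmem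
        have hFS := hmem.1.1
        show (∏ᶠ e ∈ S \ F, (X e : MvPolynomial E ℝ)) *
            rename Subtype.val (∏ᶠ e ∈ T'ᶜ, (X e : MvPolynomial ↥(Sᶜ) ℝ))
          = mon (F ∪ Subtype.val '' T')
        have hdisj : Disjoint (S \ F) (Subtype.val '' (T'ᶜ) : Set E) := by
          rw [Set.disjoint_left]
          rintro x ⟨hxS, _⟩ ⟨g, _, rfl⟩
          exact g.2 hxS
        rw [hmon]
        simp only
        rw [id4 hFS, finprod_mem_union hdisj (Set.toFinite _) (Set.toFinite _)]
        congr 1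
        rw [finprod_mem_eq_finite_toFinset_prod _ (Set.toFinite _),
          finprod_mem_eq_finite_toFinset_prod _ (Set.toFinite _), map_prod]
        simp only [rename_X]
        rw [show (Set.toFinite (Subtype.val '' (T'ᶜ) : Set E)).toFinset
            = (Set.toFinite (T'ᶜ)).toFinset.image Subtype.val by
          rw [← Set.Finite.toFinset_image Subtype.val (Set.toFinite (T'ᶜ)) (Set.toFinite _)]]
        rw [Finset.prod_image (by intro a _ b _ h; exact Subtype.ext h)]
    rw [hpsi, key, Finset.sum_filter_add_sum_filter_not]
  · -- degree bound
    intro m hm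
    obtain ⟨T, hTmem, hmT⟩ := Finset.mem_biUnion.mp (MvPolynomial.support_sum hm)
    rw [Finset.mem_filter, Set.Finite.mem_toFinset] at hTmem
    obtain ⟨hTtree, hTbad⟩ := hTmem
    have hmonT : mon T = monomial (∑ e ∈ (Set.toFinite (Tᶜ)).toFinset, Finsupp.single e 1) 1 := by
      rw [hmon]
      simp only
      rw [finprod_mem_eq_finite_toFinset_prod _ (Set.toFinite _), prod_X_monomial]
    rw [hmonT, support_monomial, if_neg one_ne_zero, Finset.mem_singleton] at hmT
    have happ : ∀ a : E, ((m a : ℕ) : ℤ) = if a ∈ Tᶜ then 1 else 0 := by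
      intro a
      rw [hmT, Finsupp.finset_sum_apply]
      simp only [Finsupp.single_apply]
      rw [Finset.sum_ite_eq' ((Set.toFinite (Tᶜ)).toFinset) a (fun _ => 1)]
      simp [Set.Finite.mem_toFinset]
    have hdeg : (∑ᶠ e ∈ S, ((m e : ℕ) : ℤ)) = ((S \ T).ncard : ℤ) := by
      rw [finsum_mem_eq_finite_toFinset_sum _ (Set.toFinite S)]
      simp only [happ]
      rw [Finset.sum_boole]
      rw [show (Set.toFinite S).toFinset.filter (fun x => x ∈ Tᶜ)
          = (Set.toFinite (S \ T)).toFinset by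
        ext x
        simp [Set.Finite.mem_toFinset, Set.mem_diff]]
      rw [← Set.ncard_eq_toFinset_card (S \ T)]
    rw [hdeg]
    -- the inequality
    have hforest : G.IsForest (T ∩ S) := isForest_mono Set.inter_subset_left hTtree.1
    have hnospan : ∃ u v : V, G.conn S u v ∧ ¬ G.conn (T ∩ S) u v := by
      by_contra hc
      push_neg at hc
      exact hTbad ⟨Set.inter_subset_right, hforest, hc⟩
    obtain ⟨u, v, hcS, hncF⟩ := hnospan
    have hlt := ncomp_lt_of_not_spanning Set.inter_subset_right hcS hncF
    have hcount := forest_ncard_add_ncomp hforest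
    have hdiffeq : S \ T = S \ (T ∩ S) := by
      ext x; simp only [Set.mem_diff, Set.mem_inter_iff]; tauto
    have hdiff : (S \ T).ncard + (T ∩ S).ncard = S.ncard := by
      rw [hdiffeq]
      exact Set.ncard_diff_add_ncard_of_subset Set.inter_subset_right (Set.toFinite _)
    have hSle : G.ncomp S ≤ Nat.card V := by omega
    show G.betti S < _
    rw [betti, Nat.card_coe_set_eq]
    push_cast
    omega
end

section
/- Let G be a connected multigraph with N edges, |G| = n, and let γ ⊆ G be a bridgefree subgraph with N_γ edges and rank |γ| ≥ 1. In the local blowup coordinate y scaling all edges of γ simultaneously (x_e ↦ y·x_e for e ∈ E(γ)), the pullback of the projective Feynman form ω_G = ψ_G^{−d/2}(ψ_G/Ξ_G)^{N − nd/2} ν_N acquires a factor y^{−s_γ/2 − 1}, where s_γ = d|γ| − 2N_γ; i.e. the order of the pole at y = 0 is s_γ/2 + 1, under the assumptions that ψ_G ∘ ρ = y^{|γ|}·ψ̃ and Ξ_G ∘ ρ = y^{|γ|}·Ξ̃ with ψ̃, Ξ̃ not divisible by y. -/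
open MvPolynomial

open MvPolynomial MGraph Real in
/-- in the local blowup coordinate y scaling all edges of a core
subgraph γ (edge set S, rank bγ ≥ 1, N_γ edges), and given the factorizations
ψ_G ∘ ρ = y^{|γ|}·ψ̃ and Ξ_G ∘ ρ = y^{|γ|}·Ξ̃, the pullback of the projective
Feynman integrand ψ^{−d/2}(ψ/Ξ)^{N−nd/2} times the Jacobian factor y^{N_γ−1}
coming from ν_N acquires exactly the factor y^{−s_γ/2−1}, s_γ = d|γ| − 2N_γ. -/
theorem feynman_form_pole_order {V E : Type} [Finite V] [Finite E]
    (G : MGraph V E) (S : Set E) (hcore : G.IsCore S)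
    (d : ℝ) (n N Nγ bγ : ℕ)
    (hn : G.rank = (n : ℤ)) (hN : Nat.card E = N) (hNγ : Nat.card S = Nγ)
    (hbγ : G.betti S = (bγ : ℤ)) (hb1 : 1 ≤ bγ)
    (Ξ : (E → ℝ) → ℝ) (ψt Ξt : ℝ → (E → ℝ) → ℝ)
    (ρ : ℝ → (E → ℝ) → (E → ℝ))
    (hρ : ∀ (y : ℝ) (x : E → ℝ),
      (∀ e ∈ S, ρ y x e = y * x e) ∧ ∀ e ∉ S, ρ y x e = x e)
    (hψ : ∀ (y : ℝ) (x : E → ℝ), eval (ρ y x) G.psi = y ^ bγ * ψt y x)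
    (hΞ : ∀ (y : ℝ) (x : E → ℝ), Ξ (ρ y x) = y ^ bγ * Ξt y x)
    (sγ : ℝ) (hs : sγ = d * bγ - 2 * Nγ) :
    ∀ (y : ℝ), 0 < y → ∀ x : E → ℝ, 0 < ψt y x → 0 < Ξt y x →
      (eval (ρ y x) G.psi) ^ (-(d / 2)) *
          ((eval (ρ y x) G.psi) / Ξ (ρ y x)) ^ ((N : ℝ) - n * d / 2) *
          y ^ ((Nγ : ℝ) - 1)
        = y ^ (-(sγ / 2) - 1) *
            ((ψt y x) ^ (-(d / 2)) * (ψt y x / Ξt y x) ^ ((N : ℝ) - n * d / 2)) := by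
  intro y hy x hψt hΞt
  have hyp : (0:ℝ) < y ^ bγ := pow_pos hy bγ
  rw [hψ, hΞ, mul_div_mul_left _ _ (ne_of_gt hyp),
      Real.mul_rpow hyp.le hψt.le, ← Real.rpow_natCast y bγ,
      ← Real.rpow_mul hy.le]
  rw [show (-(sγ/2) - 1 : ℝ) = ((bγ:ℝ) * (-(d/2))) + ((Nγ:ℝ) - 1) by rw [hs]; ring,
      Real.rpow_add hy]
  ring
end
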